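/- arXiv:1201.2499 — 4 statements merged into one kernel-verified Lean document; each statement's English description precedes it below -/
import Mathlib

section
/- Let T be a triangulated category, let X and Y be thick subcategories of T, assume that the subcategory of extensions X * Y is a triangulated subcategory of T, and let Q : T → T/(X ∩ Y) be the Verdier quotient functor. Then Q(X) * Q(Y) = Q(X * Y), where Q(X), Q(Y), Q(X * Y) denote the closures under isomorphism in T/(X ∩ Y) of the images of X, Y, X * Y under Q, and the star on the left is computed in T/(X ∩ Y). -/
namespace Paper

open CategoryTheory Limits Triangulated Pretriangulated ZeroObject

universe w v u

variable {C : Type u} [Category.{v} C] [HasZeroObject C] [Preadditive C] [HasShift C ℤ]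
  [∀ n : ℤ, (shiftFunctor C n).Additive] [Pretriangulated C]

/-- The subcategory of extensions `X * Y`: objects `e` admitting a distinguished triangle
`x ⟶ e ⟶ y ⟶ x⟦1⟧` with `x ∈ X` and `y ∈ Y`. -/
def star (X Y : Set C) : Set C :=
  {e | ∃ (x y : C) (_ : x ∈ X) (_ : y ∈ Y) (f : x ⟶ e) (g : e ⟶ y) (h : y ⟶ x⟦(1 : ℤ)⟧),
    Triangle.mk f g h ∈ distTriang C}

/-- A (strictly full) triangulated subcategory: a class of objects containing `0`, closed
under isomorphisms, suspension, desuspension and extensions. -/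
structure IsTriangulatedSubcat (S : Set C) : Prop where
  zero_mem : (0 : C) ∈ S
  mem_of_iso : ∀ {a b : C}, (a ≅ b) → a ∈ S → b ∈ S
  shift_mem : ∀ {a : C}, a ∈ S → a⟦(1 : ℤ)⟧ ∈ S
  unshift_mem : ∀ {a : C}, a ∈ S → a⟦(-1 : ℤ)⟧ ∈ S
  ext₂ : ∀ {a e b : C} (f : a ⟶ e) (g : e ⟶ b) (h : b ⟶ a⟦(1 : ℤ)⟧),
    (Triangle.mk f g h ∈ distTriang C) → a ∈ S → b ∈ S → e ∈ S

/-- A thick subcategory: a triangulated subcategory closed under direct summands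
(equivalently, retracts). -/
structure IsThickSubcat (S : Set C) extends IsTriangulatedSubcat S : Prop where
  mem_of_retract : ∀ {a s : C}, s ∈ S → (∃ (i : a ⟶ s) (p : s ⟶ a), i ≫ p = 𝟙 a) → a ∈ S

/-- `(U, V)` is a stable t-structure in the (triangulated sub)category whose class of
objects is `S`: both are triangulated subcategories contained in `S`, `Hom(U, V) = 0`
and `U * V = S`. -/
structure IsStableTStructureIn (S U V : Set C) : Prop where
  subsetU : U ⊆ S
  subsetV : V ⊆ S
  triU : IsTriangulatedSubcat U
  triV : IsTriangulatedSubcat V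
  hom_zero : ∀ {u v : C}, u ∈ U → v ∈ V → ∀ f : u ⟶ v, f = 0
  star_eq : star U V = S

lemma IsTriangulatedSubcat.shift_all {S : Set C} (hS : IsTriangulatedSubcat S) (a : C) (n : ℤ)
    (ha : a ∈ S) : a⟦n⟧ ∈ S := by
  induction n using Int.induction_on with
  | zero => exact hS.mem_of_iso ((shiftFunctorZero C ℤ).app a).symm ha
  | succ i hi =>
      exact hS.mem_of_iso ((shiftFunctorAdd' C (i : ℤ) 1 ((i : ℤ) + 1) rfl).app a).symm
        (hS.shift_mem hi)
  | pred i hi =>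
      exact hS.mem_of_iso
        ((shiftFunctorAdd' C (-(i : ℤ)) (-1) (-(i : ℤ) - 1) (by ring)).app a).symm
        (hS.unshift_mem hi)

/-- The Mathlib `Triangulated.Subcategory` associated to a class of objects satisfying
`IsTriangulatedSubcat`. -/
def IsTriangulatedSubcat.toSubcategory {S : Set C} (hS : IsTriangulatedSubcat S) :
    ObjectProperty C :=
  (· ∈ S)

instance {S : Set C} (hS : IsTriangulatedSubcat S) : hS.toSubcategory.IsTriangulated where
  exists_zero := ⟨0, isZero_zero C, hS.zero_mem⟩
  isStableUnderShiftBy a := ⟨fun x hx => hS.shift_all x a hx⟩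
  ext₂' T hT h₁ h₃ := ⟨T.obj₂, hS.ext₂ T.mor₁ T.mor₂ T.mor₃ hT h₁ h₃, ⟨Iso.refl _⟩⟩

lemma IsTriangulatedSubcat.inter {X Y : Set C} (hX : IsTriangulatedSubcat X)
    (hY : IsTriangulatedSubcat Y) : IsTriangulatedSubcat (X ∩ Y) where
  zero_mem := ⟨hX.zero_mem, hY.zero_mem⟩
  mem_of_iso := fun e h => ⟨hX.mem_of_iso e h.1, hY.mem_of_iso e h.2⟩
  shift_mem := fun h => ⟨hX.shift_mem h.1, hY.shift_mem h.2⟩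
  unshift_mem := fun h => ⟨hX.unshift_mem h.1, hY.unshift_mem h.2⟩
  ext₂ := fun f g h hT ha hb => ⟨hX.ext₂ f g h hT ha.1 hb.1, hY.ext₂ f g h hT ha.2 hb.2⟩

/-- The Verdier quotient of `C` by the triangulated subcategory `S`. -/
abbrev VerdierQuotient {S : Set C} (hS : IsTriangulatedSubcat S) : Type _ :=
  hS.toSubcategory.trW.Localization

/-- The Verdier quotient functor. -/
noncomputable abbrev Vq {S : Set C} (hS : IsTriangulatedSubcat S) : C ⥤ VerdierQuotient hS :=
  hS.toSubcategory.trW.Q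

/-- The essential image of a class of objects under a functor (the closure under
isomorphisms of the image). -/
def QSet {D : Type*} [Category D] (L : C ⥤ D) (S : Set C) : Set D :=
  {d | ∃ s ∈ S, Nonempty (L.obj s ≅ d)}

/-- The right perpendicular class `X^⊥`. -/
def rightPerp (X : Set C) : Set C := {t | ∀ {x : C}, x ∈ X → ∀ f : x ⟶ t, f = 0}

/-- The left perpendicular class `^⊥X`. -/
def leftPerp (X : Set C) : Set C := {t | ∀ {x : C}, x ∈ X → ∀ f : t ⟶ x, f = 0}


variable [IsTriangulated C]

/-- If `X`, `Y` are thick subcategories of `C` such that `X * Y` is a triangulated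
subcategory, and `Q : C ⥤ C/(X ∩ Y)` is the Verdier quotient functor, then
`Q(X) * Q(Y) = Q(X * Y)` in `C/(X ∩ Y)`. -/
theorem statement3 {X Y : Set C} (hX : IsThickSubcat X) (hY : IsThickSubcat Y)
    (hXY : IsTriangulatedSubcat (star X Y)) :
    star (QSet (Vq (hX.toIsTriangulatedSubcat.inter hY.toIsTriangulatedSubcat)) X) (QSet (Vq (hX.toIsTriangulatedSubcat.inter hY.toIsTriangulatedSubcat)) Y) =
      QSet (Vq (hX.toIsTriangulatedSubcat.inter hY.toIsTriangulatedSubcat)) (star X Y) := by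
  set hN := hX.toIsTriangulatedSubcat.inter hY.toIsTriangulatedSubcat with hNdef
  set L : C ⥤ VerdierQuotient hN := Vq hN with hLdef
  set W := hN.toSubcategory.trW with hWdef
  apply Set.eq_of_subset_of_subset
  · -- ⊆ : extensions of images come from X * Y
    rintro d ⟨a, b, ⟨x, hx, ⟨ex⟩⟩, ⟨y, hy, ⟨ey⟩⟩, f, g, h, hT⟩
    -- transport the triangle to (L.obj x, d, L.obj y)
    set f₀ : L.obj y ⟶ (L.obj x)⟦(1 : ℤ)⟧ := ey.hom ≫ h ≫ (ex.inv)⟦(1 : ℤ)⟧' with hf₀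
    have hT₂ : Triangle.mk (ex.hom ≫ f) (g ≫ ey.inv) f₀ ∈
        distTriang (VerdierQuotient hN) := by
      refine isomorphic_distinguished _ hT _ ?_
      refine Triangle.isoMk _ _ ex (Iso.refl _) ey (by simp [Triangle.mk]) (by simp [Triangle.mk]) ?_
      dsimp [Triangle.mk]
      rw [hf₀]
      simp [← Functor.map_comp]
    set f₁ : L.obj y ⟶ L.obj (x⟦(1 : ℤ)⟧) :=
      f₀ ≫ (L.commShiftIso (1 : ℤ)).inv.app x with hf₁
    obtain ⟨φ, hφ⟩ := Localization.exists_leftFraction L W f₁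
    obtain ⟨n, g₂, h₂, hTn, hn⟩ := φ.hs
    have hz : φ.Y' ∈ X := hX.ext₂ _ _ _ hTn (hX.shift_mem hx) hn.1
    set x' : C := φ.Y'⟦(-1 : ℤ)⟧ with hx'def
    have hx' : x' ∈ X := hX.unshift_mem hz
    set ζ : x'⟦(1 : ℤ)⟧ ≅ φ.Y' := (shiftEquiv C (1 : ℤ)).counitIso.app φ.Y' with hζ
    obtain ⟨e, f₃, g₃, hT₃⟩ := distinguished_cocone_triangle₂ (φ.f ≫ ζ.inv)
    have he : e ∈ star X Y := ⟨x', y, hx', hy, f₃, g₃, _, hT₃⟩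
    -- compare the two triangles after two rotations
    have hsiso : IsIso (L.map φ.s) := Localization.inverts L W φ.s φ.hs
    set α : (L.obj x)⟦(1 : ℤ)⟧ ≅ (L.obj x')⟦(1 : ℤ)⟧ :=
      (asIso ((L.commShiftIso (1 : ℤ)).inv.app x)) ≪≫ (asIso (L.map φ.s)) ≪≫
        (L.mapIso ζ.symm) ≪≫ (asIso ((L.commShiftIso (1 : ℤ)).hom.app x')) with hα
    have comm : (Triangle.mk (ex.hom ≫ f) (g ≫ ey.inv) f₀).rotate.rotate.mor₁ ≫ α.hom =
        (Iso.refl (L.obj y)).hom ≫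
          ((L.mapTriangle.obj (Triangle.mk f₃ g₃ (φ.f ≫ ζ.inv))).rotate.rotate).mor₁ := by
      have this1 : f₀ ≫ (L.commShiftIso (1 : ℤ)).inv.app x ≫ L.map φ.s = L.map φ.f := by
        rw [← Category.assoc, ← hf₁, hφ]
        dsimp [MorphismProperty.LeftFraction.map]
        rw [Category.assoc, IsIso.inv_hom_id, Category.comp_id]
      show f₀ ≫ α.hom =
        𝟙 (L.obj y) ≫ (L.map (φ.f ≫ ζ.inv) ≫ (L.commShiftIso (1 : ℤ)).hom.app x')
      rw [Category.id_comp, hα]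
      simp only [Iso.trans_hom, asIso_hom, Functor.mapIso_hom, Iso.symm_hom,
        Functor.map_comp, Category.assoc]
      rw [reassoc_of% this1]
    have e₃ := isoTriangleOfIso₁₂ _ _
      (rot_of_distTriang _ (rot_of_distTriang _ hT₂))
      (rot_of_distTriang _ (rot_of_distTriang _ (L.map_distinguished _ hT₃)))
      (Iso.refl (L.obj y)) α comm
    have e₄ : d⟦(1 : ℤ)⟧ ≅ (L.obj e)⟦(1 : ℤ)⟧ := Triangle.π₃.mapIso e₃
    exact ⟨e, he, ⟨((shiftFunctor (VerdierQuotient hN) (1 : ℤ)).preimageIso e₄).symm⟩⟩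
  · -- ⊇ : images of extensions are extensions of images
    rintro d ⟨e, ⟨x, y, hx, hy, f, g, h, hT⟩, ⟨ι⟩⟩
    refine ⟨L.obj x, L.obj y, ⟨x, hx, ⟨Iso.refl _⟩⟩, ⟨y, hy, ⟨Iso.refl _⟩⟩,
      L.map f ≫ ι.hom, ι.inv ≫ L.map g,
      L.map h ≫ (L.commShiftIso (1 : ℤ)).hom.app x, ?_⟩
    refine isomorphic_distinguished _ (L.map_distinguished _ hT) _ ?_
    exact Triangle.isoMk _ _ (Iso.refl _) ι.symm (Iso.refl _) (by dsimp [Triangle.mk, Functor.mapTriangle]; simp) (by dsimp [Triangle.mk, Functor.mapTriangle]; simp) (by dsimp [Triangle.mk, Functor.mapTriangle]; simp)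

end Paper
end

section
/- Let T be a triangulated category, let X and Y be thick subcategories of T, assume that the subcategory of extensions X * Y is a triangulated subcategory of T, and let Q : T → T/(X ∩ Y) be the Verdier quotient functor. Then Q(X) * Q(Y) = Q(T) (i.e. every object of the quotient lies in Q(X) * Q(Y)) if and only if X * Y = T. -/
namespace Paper

open CategoryTheory Limits Triangulated Pretriangulated ZeroObject

universe w v u

variable {C : Type u} [Category.{v} C] [HasZeroObject C] [Preadditive C] [HasShift C ℤ]
  [∀ n : ℤ, (shiftFunctor C n).Additive] [Pretriangulated C]

instance IsTriangulatedSubcat.isTriangulated_toSubcategory {S : Set C}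
    (hS : IsTriangulatedSubcat S) : hS.toSubcategory.IsTriangulated where
  exists_zero := ⟨0, isZero_zero C, hS.zero_mem⟩
  isStableUnderShiftBy a := ⟨fun X hX => hS.shift_all X a hX⟩
  ext₂' T hT h₁ h₃ := ObjectProperty.le_isoClosure _ _ (hS.ext₂ T.mor₁ T.mor₂ T.mor₃ hT h₁ h₃)

variable [IsTriangulated C]


lemma IsTriangulatedSubcat.ext₁' {S : Set C} (hS : IsTriangulatedSubcat S) {T : Triangle C}
    (hT : T ∈ distTriang C) (h₂ : T.obj₂ ∈ S) (h₃ : T.obj₃ ∈ S) : T.obj₁ ∈ S :=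
  hS.ext₂ T.invRotate.mor₁ T.invRotate.mor₂ T.invRotate.mor₃
    (inv_rot_of_distTriang T hT) (hS.unshift_mem h₃) h₂

lemma mem_of_isZero_image {S : Set C} (hS : IsTriangulatedSubcat S)
    (hret : ∀ {a s : C}, s ∈ S → (∃ (i : a ⟶ s) (p : s ⟶ a), i ≫ p = 𝟙 a) → a ∈ S)
    {w : C} (hw : IsZero ((Vq hS).obj w)) : w ∈ S := by
  have heq : (Vq hS).map (𝟙 w) = (Vq hS).map 0 := by
    rw [(Vq hS).map_id, (Vq hS).map_zero]
    exact hw.eq_of_src _ _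
  obtain ⟨z, s, hs, fac⟩ :=
    (MorphismProperty.map_eq_iff_postcomp (Vq hS) hS.toSubcategory.trW _ _).1 heq
  simp only [Category.id_comp, Limits.zero_comp] at fac
  obtain ⟨Z, g, h, hT, hZ⟩ := hs
  rw [fac] at hT
  have hT' := rot_of_distTriang _ hT
  obtain ⟨r, hr⟩ := Pretriangulated.Triangle.coyoneda_exact₃ _ hT' (𝟙 (w⟦(1:ℤ)⟧))
    (by change 𝟙 _ ≫ (-(shiftFunctor C (1:ℤ)).map (0 : w ⟶ z)) = 0; simp)
  have hw1 : w⟦(1:ℤ)⟧ ∈ S := hret (show Z ∈ S from hZ) ⟨r, h, hr.symm⟩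
  exact hS.mem_of_iso ((shiftFunctorCompIsoId C (1:ℤ) (-1) (by ring)).app w)
    (hS.unshift_mem hw1)

lemma mem_of_iso_image {S T : Set C} (hS : IsTriangulatedSubcat S)
    (hret : ∀ {a s : C}, s ∈ S → (∃ (i : a ⟶ s) (p : s ⟶ a), i ≫ p = 𝟙 a) → a ∈ S)
    (hTsub : IsThickSubcat T) (hST : S ⊆ T)
    {t x : C} (hx : x ∈ T) (e : (Vq hS).obj t ≅ (Vq hS).obj x) : t ∈ T := by
  obtain ⟨φ, hφ⟩ := Localization.exists_leftFraction (Vq hS) hS.toSubcategory.trW e.hom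
  have hiso : IsIso ((Vq hS).map φ.f) := by
    haveI := Localization.inverts (Vq hS) hS.toSubcategory.trW φ.s φ.hs
    rw [← φ.map_comp_map_s (Vq hS) (Localization.inverts _ _), ← hφ]
    infer_instance
  obtain ⟨Zs, gs, hs3, hTs, hZs⟩ := φ.hs
  have hu : φ.Y' ∈ T := hTsub.ext₂ _ _ _ hTs hx (hST (show Zs ∈ S from hZs))
  obtain ⟨Z, g, h, hT⟩ := Pretriangulated.distinguished_cocone_triangle φ.f
  have hZzero : IsZero ((Vq hS).obj Z) := by
    have := (Pretriangulated.Triangle.isZero₃_iff_isIso₁ _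
      ((Vq hS).map_distinguished _ hT)).2 hiso
    exact this
  have hZ : Z ∈ T := hST (mem_of_isZero_image hS hret hZzero)
  exact hTsub.toIsTriangulatedSubcat.ext₁' hT hu hZ

/-- If `X`, `Y` are thick subcategories of `C` such that `X * Y` is a triangulated
subcategory, and `Q : C ⥤ C/(X ∩ Y)` is the Verdier quotient functor, then
`Q(X) * Q(Y) = Q(C)` if and only if `X * Y = C`. -/
theorem statement4 {X Y : Set C} (hX : IsThickSubcat X) (hY : IsThickSubcat Y)
    (hXY : IsTriangulatedSubcat (star X Y)) :
    star (QSet (Vq (hX.toIsTriangulatedSubcat.inter hY.toIsTriangulatedSubcat)) X) (QSet (Vq (hX.toIsTriangulatedSubcat.inter hY.toIsTriangulatedSubcat)) Y) = Set.univ ↔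
      star X Y = Set.univ := by
  classical
  set hS : IsTriangulatedSubcat (X ∩ Y) :=
    hX.toIsTriangulatedSubcat.inter hY.toIsTriangulatedSubcat with hSdef
  have hret : ∀ {a s : C}, s ∈ X ∩ Y →
      (∃ (i : a ⟶ s) (p : s ⟶ a), i ≫ p = 𝟙 a) → a ∈ X ∩ Y :=
    fun hs hr => ⟨hX.mem_of_retract hs.1 hr, hY.mem_of_retract hs.2 hr⟩
  constructor
  · intro hfull
    rw [Set.eq_univ_iff_forall]
    intro c
    have hc : (Vq hS).obj c ∈ star (QSet (Vq hS) X) (QSet (Vq hS) Y) := by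
      rw [hfull]; trivial
    obtain ⟨a, b, ha, hb, f, g, h3, hT⟩ := hc
    obtain ⟨x, hx, ⟨ea⟩⟩ := ha
    obtain ⟨y, hy, ⟨eb⟩⟩ := hb
    obtain ⟨φ, hφ⟩ := Localization.exists_leftFraction (Vq hS) hS.toSubcategory.trW (g ≫ eb.inv)
    obtain ⟨Zs, gs, hs3, hTs, hZs⟩ := φ.hs
    have hy' : φ.Y' ∈ Y := hY.ext₂ _ _ _ hTs hy (show Zs ∈ X ∩ Y from hZs).2
    obtain ⟨Z, gz, hz, hT2⟩ := Pretriangulated.distinguished_cocone_triangle φ.f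
    haveI hQs : IsIso ((Vq hS).map φ.s) :=
      Localization.inverts (Vq hS) hS.toSubcategory.trW φ.s φ.hs
    have comm : (Triangle.mk f g h3).rotate.mor₁ ≫ (eb.symm ≪≫ asIso ((Vq hS).map φ.s)).hom =
        (Iso.refl ((Vq hS).obj c)).hom ≫
          ((Vq hS).mapTriangle.obj (Triangle.mk φ.f gz hz)).mor₁ := by
      change g ≫ eb.inv ≫ (Vq hS).map φ.s = 𝟙 _ ≫ (Vq hS).map φ.f
      rw [Category.id_comp, ← φ.map_comp_map_s (Vq hS) (Localization.inverts _ _), ← hφ,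
        Category.assoc]
    have eiso := Pretriangulated.isoTriangleOfIso₁₂ _ _ (rot_of_distTriang _ hT)
      ((Vq hS).map_distinguished _ hT2) (Iso.refl _) (eb.symm ≪≫ @asIso _ _ _ _ ((Vq hS).map φ.s) hQs) comm
    have e3 : a⟦(1:ℤ)⟧ ≅ (Vq hS).obj Z := Pretriangulated.Triangle.π₃.mapIso eiso
    have eZ : (Vq hS).obj (Z⟦(-1:ℤ)⟧) ≅ (Vq hS).obj x :=
      ((Vq hS).commShiftIso (-1:ℤ)).app Z ≪≫
        (shiftFunctor (VerdierQuotient hS) (-1:ℤ)).mapIso e3.symm ≪≫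
        (shiftFunctorCompIsoId (VerdierQuotient hS) (1:ℤ) (-1:ℤ) (by ring)).app a ≪≫ ea.symm
    have hZX : Z⟦(-1:ℤ)⟧ ∈ X :=
      mem_of_iso_image hS hret hX Set.inter_subset_left hx eZ
    exact ⟨Z⟦(-1:ℤ)⟧, φ.Y', hZX, hy', (Triangle.mk φ.f gz hz).invRotate.mor₁,
      (Triangle.mk φ.f gz hz).invRotate.mor₂, (Triangle.mk φ.f gz hz).invRotate.mor₃,
      inv_rot_of_distTriang _ hT2⟩
  · intro hfull
    rw [Set.eq_univ_iff_forall]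
    intro d
    haveI : (Vq hS).EssSurj := Localization.essSurj _ hS.toSubcategory.trW
    obtain ⟨c, ⟨ec⟩⟩ : ∃ c, Nonempty ((Vq hS).obj c ≅ d) :=
      ⟨(Vq hS).objPreimage d, ⟨(Vq hS).objObjPreimageIso d⟩⟩
    have hc : c ∈ star X Y := by rw [hfull]; trivial
    obtain ⟨x, y, hx, hy, f, g, h3, hT⟩ := hc
    refine ⟨(Vq hS).obj x, (Vq hS).obj y, ⟨x, hx, ⟨Iso.refl _⟩⟩, ⟨y, hy, ⟨Iso.refl _⟩⟩,
      (Vq hS).map f ≫ ec.hom, ec.inv ≫ (Vq hS).map g,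
      (Vq hS).map h3 ≫ ((Vq hS).commShiftIso (1:ℤ)).hom.app x, ?_⟩
    refine Pretriangulated.isomorphic_distinguished _ ((Vq hS).map_distinguished _ hT) _ ?_
    exact Pretriangulated.Triangle.isoMk _ _ (Iso.refl _) ec.symm (Iso.refl _)
      (by change ((Vq hS).map f ≫ ec.hom) ≫ ec.inv = 𝟙 _ ≫ (Vq hS).map f; simp)
      (by change (ec.inv ≫ (Vq hS).map g) ≫ 𝟙 _ = ec.inv ≫ (Vq hS).map g; simp)
      (by
        change ((Vq hS).map h3 ≫ ((Vq hS).commShiftIso (1:ℤ)).hom.app x) ≫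
          (shiftFunctor _ (1:ℤ)).map (𝟙 _) =
          𝟙 _ ≫ ((Vq hS).map h3 ≫ ((Vq hS).commShiftIso (1:ℤ)).hom.app x)
        simp)


end Paper
end

section
/- Let T be a triangulated category, let (U, V) be a stable t-structure in T, and let X be a thick subcategory of T such that (X ∩ U, X ∩ V) is a stable t-structure in X. Then U * X = U * (X ∩ V) and X * V = (X ∩ U) * V. -/
namespace Paper

open CategoryTheory Limits Triangulated Pretriangulated ZeroObject

universe w v u

variable {C : Type u} [Category.{v} C] [HasZeroObject C] [Preadditive C] [HasShift C ℤ]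
  [∀ n : ℤ, (shiftFunctor C n).Additive] [Pretriangulated C]

variable [IsTriangulated C]

/-- Let `(U, V)` be a stable t-structure in `C` and `X` a thick subcategory such that
`(X ∩ U, X ∩ V)` is a stable t-structure in `X`.  Then `U * X = U * (X ∩ V)` and
`X * V = (X ∩ U) * V`. -/
theorem statement12 {U V X : Set C} (hUV : IsStableTStructureIn Set.univ U V)
    (hX : IsThickSubcat X) (h : IsStableTStructureIn X (X ∩ U) (X ∩ V)) :
    star U X = star U (X ∩ V) ∧ star X V = star (X ∩ U) V := by
  constructor
  · apply Set.Subset.antisymm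
    · rintro e ⟨u, x, hu, hx, f, g, w, hT⟩
      have hx' : x ∈ star (X ∩ U) (X ∩ V) := h.star_eq.symm ▸ hx
      obtain ⟨xu, xv, hxu, hxv, a, b, c, hT2⟩ := hx'
      obtain ⟨Z, p, q, hT3⟩ := distinguished_cocone_triangle (g ≫ b)
      have h12 : Triangle.mk g w (-f⟦(1 : ℤ)⟧') ∈ distTriang C := rot_of_distTriang _ hT
      have h23 : Triangle.mk b c (-a⟦(1 : ℤ)⟧') ∈ distTriang C := rot_of_distTriang _ hT2
      have oct := Triangulated.someOctahedron (u₁₃ := g ≫ b) rfl h12 h23 hT3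
      have hZ : Z ∈ U := hUV.triU.ext₂ _ _ _ oct.mem (hUV.triU.shift_mem hu)
        (hUV.triU.shift_mem hxu.2)
      exact ⟨_, _, hUV.triU.unshift_mem hZ, hxv, _, _, _, inv_rot_of_distTriang _ hT3⟩
    · rintro e ⟨u, y, hu, hy, f, g, w, hT⟩
      exact ⟨u, y, hu, hy.1, f, g, w, hT⟩
  · apply Set.Subset.antisymm
    · rintro e ⟨x, v, hx, hv, f, g, w, hT⟩
      have hx' : x ∈ star (X ∩ U) (X ∩ V) := h.star_eq.symm ▸ hx
      obtain ⟨xu, xv, hxu, hxv, a, b, c, hT2⟩ := hx'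
      obtain ⟨Z, p, q, hT3⟩ := distinguished_cocone_triangle (a ≫ f)
      have oct := Triangulated.someOctahedron (u₁₃ := a ≫ f) rfl hT2 hT hT3
      have hZ : Z ∈ V := hUV.triV.ext₂ _ _ _ oct.mem hxv.2 hv
      exact ⟨xu, Z, hxu, hZ, a ≫ f, p, q, hT3⟩
    · rintro e ⟨x, v, hx, hv, f, g, w, hT⟩
      exact ⟨x, v, hx.1, hv, f, g, w, hT⟩

end Paper
end

section
/- Let T be a triangulated category and let (X, Y) and (Y, Z) be stable t-structures in T such that the subcategory of extensions Z * X is a triangulated subcategory of T. Then (X, Y ∩ (Z * X)) and (Y ∩ (Z * X), Z) are stable t-structures in Z * X. -/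
namespace Paper

open CategoryTheory Limits Triangulated Pretriangulated ZeroObject

universe w v u

variable {C : Type u} [Category.{v} C] [HasZeroObject C] [Preadditive C] [HasShift C ℤ]
  [∀ n : ℤ, (shiftFunctor C n).Additive] [Pretriangulated C]

variable [IsTriangulated C]

lemma IsTriangulatedSubcat.ext₃ {S : Set C} (hS : IsTriangulatedSubcat S)
    {a e b : C} (f : a ⟶ e) (g : e ⟶ b) (h : b ⟶ a⟦(1 : ℤ)⟧)
    (hT : Triangle.mk f g h ∈ distTriang C) (ha : a ∈ S) (he : e ∈ S) : b ∈ S :=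
  hS.ext₂ (Triangle.mk f g h).rotate.mor₁ (Triangle.mk f g h).rotate.mor₂
    (Triangle.mk f g h).rotate.mor₃ (rot_of_distTriang _ hT) he (hS.shift_mem ha)

lemma IsTriangulatedSubcat.ext₁ {S : Set C} (hS : IsTriangulatedSubcat S)
    {a e b : C} (f : a ⟶ e) (g : e ⟶ b) (h : b ⟶ a⟦(1 : ℤ)⟧)
    (hT : Triangle.mk f g h ∈ distTriang C) (he : e ∈ S) (hb : b ∈ S) : a ∈ S :=
  hS.ext₂ (Triangle.mk f g h).invRotate.mor₁ (Triangle.mk f g h).invRotate.mor₂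
    (Triangle.mk f g h).invRotate.mor₃ (inv_rot_of_distTriang _ hT)
    (hS.unshift_mem hb) he

/-- Let `(X, Y)` and `(Y, Z)` be stable t-structures in `C` with `Z * X` a triangulated
subcategory of `C`.  Then `(X, Y ∩ (Z * X))` and `(Y ∩ (Z * X), Z)` are stable
t-structures in `Z * X`. -/
theorem statement13 {X Y Z : Set C} (hXY : IsStableTStructureIn Set.univ X Y)
    (hYZ : IsStableTStructureIn Set.univ Y Z) (hZX : IsTriangulatedSubcat (star Z X)) :
    IsStableTStructureIn (star Z X) X (Y ∩ star Z X) ∧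
      IsStableTStructureIn (star Z X) (Y ∩ star Z X) Z := by
  have hX := hXY.triU
  have hXS : X ⊆ star Z X := fun x hx =>
    ⟨0, x, hYZ.triV.zero_mem, hx, 0, 𝟙 x, 0, contractible_distinguished₁ x⟩
  have hZS : Z ⊆ star Z X := fun z hz =>
    ⟨z, 0, hz, hX.zero_mem, 𝟙 z, 0, 0, contractible_distinguished z⟩
  constructor
  · refine ⟨hXS, Set.inter_subset_right, hX, hXY.triV.inter hZX,
      fun hu hv f => hXY.hom_zero hu hv.1 f, ?_⟩
    ext e
    constructor
    · rintro ⟨x, y, hx, hy, f, g, h, hT⟩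
      exact hZX.ext₂ f g h hT (hXS hx) hy.2
    · intro he
      have hmem : e ∈ star X Y := by rw [hXY.star_eq]; trivial
      obtain ⟨x, y, hx, hy, f, g, h, hT⟩ := hmem
      exact ⟨x, y, hx, ⟨hy, hZX.ext₃ f g h hT (hXS hx) he⟩, f, g, h, hT⟩
  · refine ⟨Set.inter_subset_right, hZS, hXY.triV.inter hZX, hYZ.triV,
      fun hu hv f => hYZ.hom_zero hu.1 hv f, ?_⟩
    ext e
    constructor
    · rintro ⟨y, z, hy, hz, f, g, h, hT⟩
      exact hZX.ext₂ f g h hT hy.2 (hZS hz)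
    · intro he
      have hmem : e ∈ star Y Z := by rw [hYZ.star_eq]; trivial
      obtain ⟨y, z, hy, hz, f, g, h, hT⟩ := hmem
      exact ⟨y, z, ⟨hy, hZX.ext₁ f g h hT he (hZS hz)⟩, hz, f, g, h, hT⟩

end Paper
end
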